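/- If a randomized 1-selection mechanism with predictions is impartial, α-consistent, and β-robust on plurality graphs, then β ≤ 3/4 and α + β ≤ 3/2. -/
import Mathlib


/-- `E` has no self-loops. -/
def NoLoops {n : ℕ} (E : Finset (Fin n × Fin n)) : Prop := ∀ i, (i, i) ∉ E

/-- The indegree of vertex `i` in the graph with edge set `E`. -/
def indeg {n : ℕ} (E : Finset (Fin n × Fin n)) (i : Fin n) : ℕ :=
  (E.filter (fun e => e.2 = i)).card

/-- `Δ(G)`: the maximum indegree of a vertex. -/
def maxIndeg {n : ℕ} (E : Finset (Fin n × Fin n)) : ℕ :=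
  Finset.univ.sup (indeg E)

/-- A plurality graph: every vertex has outdegree exactly one. -/
def Plurality {n : ℕ} (E : Finset (Fin n × Fin n)) : Prop :=
  ∀ i, (E.filter (fun e => e.1 = i)).card = 1

/-- A (randomized) 1-selection mechanism with predictions: for each `n`, given a predicted
vertex and a graph, it assigns a selection probability to each vertex. -/
abbrev Mech1 : Type :=
  ∀ n : ℕ, Fin n → Finset (Fin n × Fin n) → Fin n → ℝ

/-- The probabilities lie in `[0,1]` and sum to at most 1 on every valid input. -/
def ValidMech1 (f : Mech1) : Prop :=
  ∀ (n : ℕ) (ih : Fin n) (E : Finset (Fin n × Fin n)), NoLoops E →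
    (∀ i, 0 ≤ f n ih E i ∧ f n ih E i ≤ 1) ∧ (∑ i, f n ih E i) ≤ 1

/-- Impartiality: the probability of selecting `i` does not depend on `i`'s outgoing edges. -/
def Impartial1 (f : Mech1) : Prop :=
  ∀ (n : ℕ) (ih : Fin n) (E E' : Finset (Fin n × Fin n)) (i : Fin n),
    NoLoops E → NoLoops E' →
    E.filter (fun e => e.1 ≠ i) = E'.filter (fun e => e.1 ≠ i) →
    f n ih E i = f n ih E' i

/-- `α`-consistency on plurality graphs. -/
def ConsistentPl (α : ℝ) (f : Mech1) : Prop :=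
  ∀ (n : ℕ) (ih : Fin n) (E : Finset (Fin n × Fin n)),
    NoLoops E → Plurality E → indeg E ih = maxIndeg E →
    α * (maxIndeg E : ℝ) ≤ ∑ i, f n ih E i * (indeg E i : ℝ)

/-- `β`-robustness on plurality graphs. -/
def RobustPl (β : ℝ) (f : Mech1) : Prop :=
  ∀ (n : ℕ) (ih : Fin n) (E : Finset (Fin n × Fin n)), NoLoops E → Plurality E →
    β * (maxIndeg E : ℝ) ≤ ∑ i, f n ih E i * (indeg E i : ℝ)

/-- If a randomized 1-selection mechanism with predictions is impartial, `α`-consistent, and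
`β`-robust on plurality graphs, then `β ≤ 3/4` and `α + β ≤ 3/2`. -/
theorem upper_bound_one_selection_plurality (α β : ℝ) (hα₀ : 0 ≤ α) (hα₁ : α ≤ 1)
    (hβ₀ : 0 ≤ β) (hβ₁ : β ≤ 1) (f : Mech1)
    (hvalid : ValidMech1 f) (himp : Impartial1 f)
    (hcons : ConsistentPl α f) (hrob : RobustPl β f) :
    β ≤ 3 / 4 ∧ α + β ≤ 3 / 2 := by
  -- graphs for β ≤ 3/4
  set G1 : Finset (Fin 4 × Fin 4) := {(0,2),(1,3),(2,1),(3,2)} with hG1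
  set G2 : Finset (Fin 4 × Fin 4) := {(0,2),(1,3),(2,3),(3,1)} with hG2
  set G3 : Finset (Fin 4 × Fin 4) := {(0,2),(1,3),(2,3),(3,2)} with hG3
  -- graphs for α + β ≤ 3/2
  set H1 : Finset (Fin 4 × Fin 4) := {(0,1),(1,0),(2,1),(3,0)} with hH1
  set H2 : Finset (Fin 4 × Fin 4) := {(0,1),(1,2),(2,1),(3,0)} with hH2
  set H3 : Finset (Fin 4 × Fin 4) := {(0,2),(1,0),(2,1),(3,0)} with hH3
  have nlG1 : NoLoops G1 := by unfold NoLoops; decide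
  have nlG2 : NoLoops G2 := by unfold NoLoops; decide
  have nlG3 : NoLoops G3 := by unfold NoLoops; decide
  have nlH1 : NoLoops H1 := by unfold NoLoops; decide
  have nlH2 : NoLoops H2 := by unfold NoLoops; decide
  have nlH3 : NoLoops H3 := by unfold NoLoops; decide
  have plG1 : Plurality G1 := by unfold Plurality; decide
  have plG2 : Plurality G2 := by unfold Plurality; decide
  have plG3 : Plurality G3 := by unfold Plurality; decide
  have plH1 : Plurality H1 := by unfold Plurality; decide
  have plH2 : Plurality H2 := by unfold Plurality; decide
  have plH3 : Plurality H3 := by unfold Plurality; decide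
  -- validity facts
  obtain ⟨pG1, sG1⟩ := hvalid 4 0 G1 nlG1
  obtain ⟨pG2, sG2⟩ := hvalid 4 0 G2 nlG2
  obtain ⟨pG3, sG3⟩ := hvalid 4 0 G3 nlG3
  obtain ⟨pH1, sH1⟩ := hvalid 4 0 H1 nlH1
  obtain ⟨pH2, sH2⟩ := hvalid 4 0 H2 nlH2
  obtain ⟨pH3, sH3⟩ := hvalid 4 0 H3 nlH3
  -- impartiality ties
  have e1 : f 4 0 G1 2 = f 4 0 G3 2 := himp 4 0 G1 G3 2 nlG1 nlG3 (by decide)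
  have e2 : f 4 0 G2 3 = f 4 0 G3 3 := himp 4 0 G2 G3 3 nlG2 nlG3 (by decide)
  have e3 : f 4 0 H1 1 = f 4 0 H2 1 := himp 4 0 H1 H2 1 nlH1 nlH2 (by decide)
  have e4 : f 4 0 H1 0 = f 4 0 H3 0 := himp 4 0 H1 H3 0 nlH1 nlH3 (by decide)
  -- robustness / consistency instances
  have rG1 := hrob 4 0 G1 nlG1 plG1
  have rG2 := hrob 4 0 G2 nlG2 plG2
  have rH2 := hrob 4 0 H2 nlH2 plH2
  have cH3 := hcons 4 0 H3 nlH3 plH3 (by decide)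
  -- expand everything
  rw [Fin.sum_univ_four] at rG1 rG2 rH2 cH3 sG1 sG2 sG3 sH1 sH2 sH3
  rw [show maxIndeg G1 = 2 from by decide, show indeg G1 0 = 0 from by decide,
      show indeg G1 1 = 1 from by decide, show indeg G1 2 = 2 from by decide,
      show indeg G1 3 = 1 from by decide] at rG1
  rw [show maxIndeg G2 = 2 from by decide, show indeg G2 0 = 0 from by decide,
      show indeg G2 1 = 1 from by decide, show indeg G2 2 = 1 from by decide,
      show indeg G2 3 = 2 from by decide] at rG2
  rw [show maxIndeg H2 = 2 from by decide, show indeg H2 0 = 1 from by decide,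
      show indeg H2 1 = 2 from by decide, show indeg H2 2 = 1 from by decide,
      show indeg H2 3 = 0 from by decide] at rH2
  rw [show maxIndeg H3 = 2 from by decide, show indeg H3 0 = 2 from by decide,
      show indeg H3 1 = 1 from by decide, show indeg H3 2 = 1 from by decide,
      show indeg H3 3 = 0 from by decide] at cH3
  push_cast at rG1 rG2 rH2 cH3
  constructor
  · linarith [e1, e2, rG1, rG2, sG1, sG2, sG3, (pG3 0).1, (pG3 1).1, (pG1 0).1, (pG2 0).1]
  · linarith [e3, e4, rH2, cH3, sH1, sH2, sH3, (pH1 2).1, (pH1 3).1, (pH2 3).1, (pH3 3).1]
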